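/- Let V be a real vector space, U ⊆ V a subspace, and W an ordered vector space with the interpolation property. Let p : V → W be sublinear (p(λv) = λ p(v) for λ ≥ 0 and p(v₁+v₂) ≤ p(v₁)+p(v₂)) and φ : U → W linear with φ ≤ p on U. Then φ extends to a linear map φ̃ : V → W with φ̃ ≤ p on all of V. -/

import Mathlib

open Set Submodule

/-- One-step extension for Hahn–Banach–Kantorovich. -/
theorem hbk_step {V W : Type*}
    [AddCommGroup V] [Module ℝ V]
    [AddCommGroup W] [PartialOrder W] [IsOrderedAddMonoid W] [Module ℝ W] [PosSMulMono ℝ W]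
    (hinterp : ∀ A B : Set W, A.Nonempty → B.Nonempty →
      (∀ a ∈ A, ∀ b ∈ B, a ≤ b) → ∃ w : W, (∀ a ∈ A, a ≤ w) ∧ ∀ b ∈ B, w ≤ b)
    (p : V → W)
    (hp_hom : ∀ c : ℝ, 0 ≤ c → ∀ v : V, p (c • v) = c • p v)
    (hp_add : ∀ v₁ v₂ : V, p (v₁ + v₂) ≤ p v₁ + p v₂)
    (f : V →ₗ.[ℝ] W) (hf : ∀ x : f.domain, f x ≤ p x) (hdom : f.domain ≠ ⊤) :
    ∃ g, f < g ∧ ∀ x : g.domain, g x ≤ p x := by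
  obtain ⟨v, -, hv⟩ : ∃ v ∈ (⊤ : Submodule ℝ V), v ∉ f.domain :=
    SetLike.exists_of_lt (lt_top_iff_ne_top.2 hdom)
  have key : ∀ x₁ x₂ : f.domain, f x₁ - p ((x₁ : V) - v) ≤ p ((x₂ : V) + v) - f x₂ := by
    intro x₁ x₂
    rw [sub_le_iff_le_add, ← sub_le_iff_le_add']
    have h1 : f x₁ + f x₂ = f (x₁ + x₂) := (f.map_add x₁ x₂).symm
    have h2 : ((x₁ + x₂ : f.domain) : V) = ((x₁ : V) - v) + ((x₂ : V) + v) := by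
      push_cast; abel
    calc f x₁ - (p ((x₂ : V) + v) - f x₂)
        = f (x₁ + x₂) - p ((x₂ : V) + v) := by rw [← h1]; abel
      _ ≤ (p ((x₁ : V) - v) + p ((x₂ : V) + v)) - p ((x₂ : V) + v) := by
          refine sub_le_sub_right ?_ _
          calc f (x₁ + x₂) ≤ p ((x₁ + x₂ : f.domain) : V) := hf _
            _ = p (((x₁ : V) - v) + ((x₂ : V) + v)) := by rw [h2]
            _ ≤ _ := hp_add _ _
      _ = p ((x₁ : V) - v) := by abel
  obtain ⟨w, hwA, hwB⟩ := hinterp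
      (Set.range fun x : f.domain => f x - p ((x : V) - v))
      (Set.range fun x : f.domain => p ((x : V) + v) - f x)
      (Set.range_nonempty _) (Set.range_nonempty _)
      (by rintro _ ⟨x₁, rfl⟩ _ ⟨x₂, rfl⟩; exact key x₁ x₂)
  have hA : ∀ x : f.domain, f x - p ((x : V) - v) ≤ w := fun x => hwA _ ⟨x, rfl⟩
  have hB : ∀ x : f.domain, w ≤ p ((x : V) + v) - f x := fun x => hwB _ ⟨x, rfl⟩
  refine ⟨f.supSpanSingleton v w hv, ?_, ?_⟩
  · refine lt_iff_le_not_ge.2 ⟨f.left_le_sup _ _, fun H => ?_⟩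
    replace H := LinearPMap.domain_mono.monotone H
    rw [LinearPMap.domain_supSpanSingleton, sup_le_iff, span_le, singleton_subset_iff] at H
    exact hv H.2
  · rintro ⟨z, hz⟩
    rcases mem_sup.1 hz with ⟨x, hx, y', hy', rfl⟩
    rcases mem_span_singleton.1 hy' with ⟨r, rfl⟩
    rw [LinearPMap.supSpanSingleton_apply_mk _ _ _ _ _ hx]
    rcases lt_trichotomy r 0 with (hr | rfl | hr)
    · -- r < 0 : use A side with x' = (-r)⁻¹ • x
      set t : ℝ := -r with ht
      have ht0 : 0 < t := neg_pos.2 hr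
      have key := hA (t⁻¹ • ⟨x, hx⟩)
      have := smul_le_smul_of_nonneg_left key ht0.le
      rw [smul_sub, ← LinearPMap.map_smul, smul_smul, mul_inv_cancel₀ ht0.ne',
        one_smul] at this
      have hcoe : ((t⁻¹ • (⟨x, hx⟩ : f.domain) : f.domain) : V) = t⁻¹ • x := rfl
      rw [hcoe, ← hp_hom t ht0.le, smul_sub, smul_smul, mul_inv_cancel₀ ht0.ne',
        one_smul] at this
      have hxv : x - t • v = x + r • v := by rw [ht]; simp [sub_eq_add_neg, neg_smul]
      rw [hxv] at this
      -- this : f ⟨x, hx⟩ - p (x + r • v) ≤ t • w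
      have h2 : f ⟨x, hx⟩ - p (x + r • v) ≤ -(r • w) := by rwa [ht, neg_smul] at this
      rw [← le_sub_iff_add_le, sub_eq_add_neg, add_comm]
      rwa [sub_le_iff_le_add] at h2
    · simp only [RingHom.id_apply, zero_smul, add_zero]
      exact hf ⟨x, hx⟩
    · -- r > 0 : use B side with x' = r⁻¹ • x
      have key := hB (r⁻¹ • ⟨x, hx⟩)
      have := smul_le_smul_of_nonneg_left key hr.le
      rw [smul_sub, ← LinearPMap.map_smul, smul_smul, mul_inv_cancel₀ hr.ne',
        one_smul] at this
      have hcoe : ((r⁻¹ • (⟨x, hx⟩ : f.domain) : f.domain) : V) = r⁻¹ • x := rfl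
      rw [hcoe, ← hp_hom r hr.le, smul_add, smul_smul, mul_inv_cancel₀ hr.ne',
        one_smul] at this
      rwa [le_sub_iff_add_le'] at this

/-- the Hahn–Banach–Kantorovich theorem. If the ordered vector space `W` has
the interpolation property, then a linear map `φ : U → W` on a subspace `U ⊆ V` dominated by
a sublinear map `p : V → W` extends linearly to all of `V`, still dominated by `p`. -/
theorem hahn_banach_kantorovich {V W : Type*}
    [AddCommGroup V] [Module ℝ V]
    [AddCommGroup W] [PartialOrder W] [IsOrderedAddMonoid W] [Module ℝ W] [PosSMulMono ℝ W]
    (hinterp : ∀ A B : Set W, A.Nonempty → B.Nonempty →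
      (∀ a ∈ A, ∀ b ∈ B, a ≤ b) → ∃ w : W, (∀ a ∈ A, a ≤ w) ∧ ∀ b ∈ B, w ≤ b)
    (U : Submodule ℝ V) (φ : U →ₗ[ℝ] W) (p : V → W)
    (hp_hom : ∀ c : ℝ, 0 ≤ c → ∀ v : V, p (c • v) = c • p v)
    (hp_add : ∀ v₁ v₂ : V, p (v₁ + v₂) ≤ p v₁ + p v₂)
    (hφp : ∀ u : U, φ u ≤ p u) :
    ∃ ψ : V →ₗ[ℝ] W, (∀ u : U, ψ u = φ u) ∧ ∀ v : V, ψ v ≤ p v := by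
  set f₀ : V →ₗ.[ℝ] W := ⟨U, φ⟩ with hf₀
  set S := { f : V →ₗ.[ℝ] W | ∀ x : f.domain, f x ≤ p x } with hS
  have hSc : ∀ c ⊆ S, IsChain (· ≤ ·) c → ∀ y ∈ c, ∃ ub ∈ S, ∀ z ∈ c, z ≤ ub := by
    intro c hcs c_chain y hy
    have cne : c.Nonempty := ⟨y, hy⟩
    have hcd : DirectedOn (· ≤ ·) c := c_chain.directedOn
    refine ⟨LinearPMap.sSup c hcd, ?_, fun _ ↦ LinearPMap.le_sSup hcd⟩
    rintro ⟨x, hx⟩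
    have hdir : DirectedOn (· ≤ ·) (LinearPMap.domain '' c) :=
      directedOn_image.2 (hcd.mono LinearPMap.domain_mono.monotone)
    rcases (mem_sSup_of_directed (cne.image _) hdir).1 hx with ⟨_, ⟨g, hgc, rfl⟩, hgx⟩
    have hle : g ≤ LinearPMap.sSup c hcd := LinearPMap.le_sSup _ hgc
    have := hcs hgc ⟨x, hgx⟩
    rwa [hle.2 (x := ⟨x, hgx⟩) (y := ⟨x, hx⟩) rfl] at this
  have hf₀S : f₀ ∈ S := fun x => hφp x
  obtain ⟨q, hpq, hqS, hq⟩ := zorn_le_nonempty₀ S hSc f₀ hf₀S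
  have hqtop : q.domain = ⊤ := by
    by_contra hne
    rcases hbk_step hinterp p hp_hom hp_add q hqS hne with ⟨r, hqr, hr⟩
    exact hqr.ne (le_antisymm hqr.le (hq hr hqr.le))
  obtain ⟨g_dom, g⟩ := q
  obtain rfl : g_dom = ⊤ := hqtop
  refine ⟨g.comp (LinearMap.id.codRestrict ⊤ fun _ ↦ trivial), ?_, ?_⟩
  · intro u
    exact (hpq.2 (rfl : ((u : f₀.domain) : V) = ((⟨u, trivial⟩ : (⊤ : Submodule ℝ V)) : V))).symm
  · intro v
    exact hqS ⟨v, trivial⟩
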